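/- Let a ∈ ℂ and define the 5×5 complex matrices A₂ = (a/2) • !![0,0,2,0,0; 0,0,0,√6,0; 0,0,0,0,2; 0,0,0,0,0; 0,0,0,0,0], A₁ = (a/2) • !![0,-√6,0,0,0; 0,0,-1,0,0; 0,0,0,1,0; 0,0,0,0,√6; 0,0,0,0,0], A₀ = (a/2) • diagonal ![2,-1,-2,-1,2], A₋₁ = -A₁ᵀ, A₋₂ = A₂ᵀ. Then A₂ᴴ*A₂ + A₁ᴴ*A₁ + A₀ᴴ*A₀ + A₋₁ᴴ*A₋₁ + A₋₂ᴴ*A₋₂ = ((7/2) * |a|^2 : ℂ) • 1. In particular, if |a|^2 = 2/7 the family (A₂, A₁, A₀, A₋₁, A₋₂) is trace-preserving. -/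

import Mathlib

open Matrix

lemma smul_conjmul (c : ℂ) (B : Matrix (Fin 5) (Fin 5) ℂ) :
    (c • B)ᴴ * (c • B) = ((starRingEnd ℂ) c * c) • (Bᴴ * B) := by
  rw [Matrix.conjTranspose_smul, Matrix.smul_mul, Matrix.mul_smul, smul_smul]
  rfl

set_option maxHeartbeats 1000000 in
theorem stmt17 (a : ℂ)
    (A₂ A₁ A₀ Am₁ Am₂ : Matrix (Fin 5) (Fin 5) ℂ)
    (hA₂ : A₂ = (a / 2) • !![0, 0, 2, 0, 0;
                             0, 0, 0, (Real.sqrt 6 : ℂ), 0;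
                             0, 0, 0, 0, 2;
                             0, 0, 0, 0, 0;
                             0, 0, 0, 0, 0])
    (hA₁ : A₁ = (a / 2) • !![0, -(Real.sqrt 6 : ℂ), 0, 0, 0;
                             0, 0, -1, 0, 0;
                             0, 0, 0, 1, 0;
                             0, 0, 0, 0, (Real.sqrt 6 : ℂ);
                             0, 0, 0, 0, 0])
    (hA₀ : A₀ = (a / 2) • Matrix.diagonal ![2, -1, -2, -1, 2])
    (hAm₁ : Am₁ = -A₁ᵀ)
    (hAm₂ : Am₂ = A₂ᵀ) :
    A₂ᴴ * A₂ + A₁ᴴ * A₁ + A₀ᴴ * A₀ + Am₁ᴴ * Am₁ + Am₂ᴴ * Am₂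
      = (((7/2) * ‖a‖ ^ 2 : ℝ) : ℂ) • 1
    ∧ (‖a‖ ^ 2 = 2/7 →
        A₂ᴴ * A₂ + A₁ᴴ * A₁ + A₀ᴴ * A₀ + Am₁ᴴ * Am₁ + Am₂ᴴ * Am₂ = 1) := by
  have hs6 : ((Real.sqrt 6 : ℂ)) * ((Real.sqrt 6 : ℂ)) = 6 := by
    rw [← Complex.ofReal_mul, Real.mul_self_sqrt (by norm_num)]
    norm_num
  set B₂ : Matrix (Fin 5) (Fin 5) ℂ := !![0, 0, 2, 0, 0;
                             0, 0, 0, (Real.sqrt 6 : ℂ), 0;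
                             0, 0, 0, 0, 2;
                             0, 0, 0, 0, 0;
                             0, 0, 0, 0, 0] with hB₂
  set B₁ : Matrix (Fin 5) (Fin 5) ℂ := !![0, -(Real.sqrt 6 : ℂ), 0, 0, 0;
                             0, 0, -1, 0, 0;
                             0, 0, 0, 1, 0;
                             0, 0, 0, 0, (Real.sqrt 6 : ℂ);
                             0, 0, 0, 0, 0] with hB₁
  set B₀ : Matrix (Fin 5) (Fin 5) ℂ := Matrix.diagonal ![2, -1, -2, -1, 2] with hB₀
  set s : ℂ := (starRingEnd ℂ) (a / 2) * (a / 2) with hsdef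
  have hAm₁' : Am₁ = (a / 2) • (-B₁ᵀ) := by
    rw [hAm₁, hA₁, Matrix.transpose_smul, smul_neg]
  have hAm₂' : Am₂ = (a / 2) • B₂ᵀ := by
    rw [hAm₂, hA₂, Matrix.transpose_smul]
  have key0 : A₂ᴴ * A₂ + A₁ᴴ * A₁ + A₀ᴴ * A₀ + Am₁ᴴ * Am₁ + Am₂ᴴ * Am₂
      = s • (B₂ᴴ * B₂ + B₁ᴴ * B₁ + B₀ᴴ * B₀ + (-B₁ᵀ)ᴴ * (-B₁ᵀ) + B₂ᵀᴴ * B₂ᵀ) := by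
    rw [hA₂, hA₁, hA₀, hAm₁', hAm₂', smul_conjmul, smul_conjmul, smul_conjmul,
      smul_conjmul, smul_conjmul, ← hsdef, smul_add, smul_add, smul_add, smul_add]
  have keyB : B₂ᴴ * B₂ + B₁ᴴ * B₁ + B₀ᴴ * B₀ + (-B₁ᵀ)ᴴ * (-B₁ᵀ) + B₂ᵀᴴ * B₂ᵀ
      = (14 : ℂ) • 1 := by
    rw [hB₂, hB₁, hB₀]
    ext i j
    fin_cases i <;> fin_cases j <;>
      simp [Matrix.mul_apply, Fin.sum_univ_five, Matrix.one_apply,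
        Matrix.conjTranspose_apply, Matrix.transpose_apply, Matrix.diagonal,
        Matrix.vecHead, Matrix.vecTail, Complex.star_def, Complex.conj_ofReal] <;>
      norm_num [sq, hs6, map_ofNat]
  have hs : (14 : ℂ) * s = (((7/2) * ‖a‖ ^ 2 : ℝ) : ℂ) := by
    rw [hsdef, map_div₀, map_ofNat]
    have : (starRingEnd ℂ) a * a = ((‖a‖ ^ 2 : ℝ) : ℂ) := by
      push_cast [Complex.sq_norm]
      rw [mul_comm, Complex.mul_conj]
    field_simp
    rw [mul_assoc, this]
    push_cast
    ring
  have key : A₂ᴴ * A₂ + A₁ᴴ * A₁ + A₀ᴴ * A₀ + Am₁ᴴ * Am₁ + Am₂ᴴ * Am₂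
      = (((7/2) * ‖a‖ ^ 2 : ℝ) : ℂ) • 1 := by
    rw [key0, keyB, smul_smul, mul_comm, hs]
  refine ⟨key, fun h => ?_⟩
  rw [key, h]
  norm_num
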